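/- arXiv:2504.09926 — 5 statements merged into one kernel-verified Lean document; each statement's English description precedes it below -/
import Mathlib

section
/- Let (X,m) be a probability space, κ > 0 and p ∈ (0,1) constants, and let P and Q be bounded linear operators on the real Hilbert space L²(X,m) such that: (1) the cone L²₊(X,m) of nonnegative functions is invariant under the adjoints P* and Q*; (2) P𝟙 = Q𝟙 = 𝟙 for the constant function 𝟙; (3) ‖P*f‖ ≤ (1−κ)‖f‖ for all f ∈ L²₀(X,m); (4) ‖Q*‖ < 1 + κp/(1−p). Then the adjoint T* of the operator T = pP + (1−p)Q has a unique fixed vector φ in the affine hyperplane {f ∈ L²(X,m) : ⟨f,𝟙⟩ = 1}, i.e. T*φ = φ and ⟨φ,𝟙⟩ = 1, and moreover φ ≥ 0 almost everywhere. -/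
open MeasureTheory ContinuousLinearMap

/-- The constant function `𝟙` as an element of `L²(X,m)` for a finite measure `m`. -/
noncomputable def oneL2 {X : Type*} [MeasurableSpace X] (m : Measure X)
    [IsFiniteMeasure m] : Lp ℝ 2 m :=
  (memLp_const (1 : ℝ)).toLp fun _ => (1 : ℝ)

set_option maxHeartbeats 2000000 in
/-- Let `(X,m)` be a probability space, `κ > 0`, `p ∈ (0,1)`, and `P`, `Q` bounded operators
on the real Hilbert space `L²(X,m)` such that: (1) the cone of nonnegative functions is
invariant under `P*` and `Q*`; (2) `P𝟙 = Q𝟙 = 𝟙`; (3) `‖P*f‖ ≤ (1−κ)‖f‖` whenever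
`∫ f dm = 0`; (4) `‖Q*‖ < 1 + κp/(1−p)`. Then `T* = (pP + (1−p)Q)*` has a unique fixed
vector `φ` with `⟨φ,𝟙⟩ = ∫ φ dm = 1`, and moreover `φ ≥ 0`. -/
theorem unique_positive_fixed_vector
    {X : Type*} [MeasurableSpace X] (m : Measure X) [IsProbabilityMeasure m]
    (κ p : ℝ) (hκ : 0 < κ) (hp0 : 0 < p) (hp1 : p < 1)
    (P Q : Lp ℝ 2 m →L[ℝ] Lp ℝ 2 m)
    (hPpos : ∀ f : Lp ℝ 2 m, 0 ≤ f → 0 ≤ ContinuousLinearMap.adjoint P f)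
    (hQpos : ∀ f : Lp ℝ 2 m, 0 ≤ f → 0 ≤ ContinuousLinearMap.adjoint Q f)
    (hP1 : P (oneL2 m) = oneL2 m) (hQ1 : Q (oneL2 m) = oneL2 m)
    (hPgap : ∀ f : Lp ℝ 2 m, (∫ x, f x ∂m) = 0 →
      ‖ContinuousLinearMap.adjoint P f‖ ≤ (1 - κ) * ‖f‖)
    (hQnorm : ‖ContinuousLinearMap.adjoint Q‖ < 1 + κ * p / (1 - p)) :
    ∃ φ : Lp ℝ 2 m,
      (ContinuousLinearMap.adjoint (p • P + (1 - p) • Q) φ = φ ∧ (∫ x, φ x ∂m) = 1 ∧ 0 ≤ φ) ∧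
      ∀ ψ : Lp ℝ 2 m,
        ContinuousLinearMap.adjoint (p • P + (1 - p) • Q) ψ = ψ → (∫ x, ψ x ∂m) = 1 →
        ψ = φ := by
  have hp1' : (0:ℝ) < 1 - p := by linarith
  set T : Lp ℝ 2 m →L[ℝ] Lp ℝ 2 m := p • P + (1 - p) • Q with hTdef
  have hone_ae : ∀ᵐ x ∂m, (oneL2 m : X → ℝ) x = 1 :=
    MemLp.coeFn_toLp (memLp_const (p := 2) (μ := m) (1 : ℝ))
  -- integral as inner product with 𝟙
  have hint : ∀ f : Lp ℝ 2 m, (∫ x, f x ∂m) = @inner ℝ _ _ (oneL2 m) f := by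
    intro f
    rw [L2.inner_def]
    refine (integral_congr_ae ?_).symm
    filter_upwards [hone_ae] with x hx
    simp [hx]
  -- adjoint decomposition
  have hTadj : adjoint T = p • adjoint P + (1 - p) • adjoint Q := by
    simp [hTdef, map_add, map_smulₛₗ]
  have hTapp : ∀ f : Lp ℝ 2 m, adjoint T f = p • adjoint P f + (1 - p) • adjoint Q f := by
    intro f
    rw [hTadj]
    rfl
  -- T 𝟙 = 𝟙
  have hT1 : T (oneL2 m) = oneL2 m := by
    simp [hTdef, hP1, hQ1, ← add_smul]
  -- T* preserves the integral
  have hTint : ∀ f : Lp ℝ 2 m, (∫ x, (adjoint T f) x ∂m) = ∫ x, f x ∂m := by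
    intro f
    rw [hint, hint, adjoint_inner_right, hT1]
  -- contraction constant
  set c : ℝ := p * (1 - κ) + (1 - p) * ‖adjoint Q‖ with hc
  have hc1 : c < 1 := by
    have h1 : (1 - p) * ‖adjoint Q‖ < (1 - p) * (1 + κ * p / (1 - p)) :=
      mul_lt_mul_of_pos_left hQnorm hp1'
    have h2 : (1 - p) * (1 + κ * p / (1 - p)) = (1 - p) + κ * p := by
      rw [mul_add, mul_one, mul_comm (1 - p), div_mul_cancel₀ _ (ne_of_gt hp1')]
    rw [hc]
    linarith [h1, h2]
  -- the contraction estimate on mean-zero functions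
  have hcontr : ∀ f : Lp ℝ 2 m, (∫ x, f x ∂m) = 0 → ‖adjoint T f‖ ≤ c * ‖f‖ := by
    intro f hf
    rw [hTapp f]
    calc ‖p • adjoint P f + (1 - p) • adjoint Q f‖
        ≤ ‖p • adjoint P f‖ + ‖(1 - p) • adjoint Q f‖ := norm_add_le _ _
      _ = p * ‖adjoint P f‖ + (1 - p) * ‖adjoint Q f‖ := by
          rw [norm_smul, norm_smul, Real.norm_of_nonneg hp0.le, Real.norm_of_nonneg hp1'.le]
      _ ≤ p * ((1 - κ) * ‖f‖) + (1 - p) * (‖adjoint Q‖ * ‖f‖) := by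
          gcongr
          · exact hPgap f hf
          · exact (adjoint Q).le_opNorm f
      _ = c * ‖f‖ := by ring
  -- T* preserves positivity
  have hTpos : ∀ f : Lp ℝ 2 m, 0 ≤ f → 0 ≤ adjoint T f := by
    intro f hf
    rw [hTapp f, ← Lp.coeFn_nonneg]
    have hP := (Lp.coeFn_nonneg _).2 (hPpos f hf)
    have hQ := (Lp.coeFn_nonneg _).2 (hQpos f hf)
    filter_upwards [Lp.coeFn_add (p • adjoint P f) ((1 - p) • adjoint Q f),
      Lp.coeFn_smul p (adjoint P f), Lp.coeFn_smul (1 - p) (adjoint Q f), hP, hQ]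
      with x h1 h2 h3 h4 h5
    simp only [Pi.zero_apply] at h4 h5
    rw [Pi.zero_apply, h1, Pi.add_apply, h2, h3, Pi.smul_apply, Pi.smul_apply,
      smul_eq_mul, smul_eq_mul]
    positivity
  -- 𝟙 is nonnegative with integral 1
  have hone_pos : (0:Lp ℝ 2 m) ≤ oneL2 m := by
    rw [← Lp.coeFn_nonneg]
    filter_upwards [hone_ae] with x hx
    simp [hx]
  have hone_int : (∫ x, (oneL2 m) x ∂m) = 1 := by
    calc (∫ x, (oneL2 m) x ∂m) = ∫ _, (1:ℝ) ∂m := integral_congr_ae hone_ae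
      _ = 1 := by simp
  -- the closed set H
  set I : Lp ℝ 2 m →L[ℝ] ℝ := innerSL ℝ (oneL2 m) with hI
  have hIval : ∀ f : Lp ℝ 2 m, I f = ∫ x, f x ∂m := fun f => (hint f).symm
  set H : Set (Lp ℝ 2 m) := {f | (∫ x, f x ∂m) = 1} with hH
  have hHclosed : IsClosed H := by
    have : H = I ⁻¹' {1} := by
      ext f
      simp only [Set.mem_preimage, Set.mem_singleton_iff, hIval]
      exact Iff.rfl
    rw [this]
    exact isClosed_singleton.preimage I.continuous
  haveI : CompleteSpace H := hHclosed.completeSpace_coe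
  have honeH : oneL2 m ∈ H := hone_int
  haveI : Nonempty H := ⟨⟨oneL2 m, honeH⟩⟩
  -- the map F on H
  have hmaps : ∀ f : Lp ℝ 2 m, f ∈ H → adjoint T f ∈ H := by
    intro f hf
    simpa [hH, hTint f] using hf
  set F : H → H := fun f => ⟨adjoint T f, hmaps f f.2⟩ with hF
  -- integral is additive on Lp (via inner product)
  have hint_sub : ∀ f g : Lp ℝ 2 m, (∫ x, (f - g) x ∂m) = (∫ x, f x ∂m) - ∫ x, g x ∂m := by
    intro f g
    rw [hint, hint, hint, inner_sub_right]
  have hK1 : Real.toNNReal c < 1 := by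
    rw [← NNReal.coe_lt_coe, Real.coe_toNNReal']
    simp only [NNReal.coe_one]
    exact max_lt hc1 one_pos
  have hlip : LipschitzWith (Real.toNNReal c) F := by
    apply LipschitzWith.of_dist_le_mul
    intro x y
    rw [Subtype.dist_eq, Subtype.dist_eq, hF]
    simp only [dist_eq_norm]
    rw [← map_sub (adjoint T)]
    have h0 : (∫ z, ((x:Lp ℝ 2 m) - y) z ∂m) = 0 := by
      rw [hint_sub, x.2, y.2]; ring
    calc ‖adjoint T ((x:Lp ℝ 2 m) - y)‖ ≤ c * ‖(x:Lp ℝ 2 m) - y‖ := hcontr _ h0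
      _ ≤ (Real.toNNReal c : ℝ) * ‖(x:Lp ℝ 2 m) - y‖ := by
          gcongr
          rw [Real.coe_toNNReal']; exact le_max_left _ _
  have hCW : ContractingWith (Real.toNNReal c) F := ⟨hK1, hlip⟩
  set φ' : H := hCW.fixedPoint F with hφ'
  have hfix : F φ' = φ' := hCW.fixedPoint_isFixedPt
  have hfixv : adjoint T (φ' : Lp ℝ 2 m) = (φ' : Lp ℝ 2 m) := congrArg Subtype.val hfix
  refine ⟨(φ' : Lp ℝ 2 m), ⟨?_, φ'.2, ?_⟩, ?_⟩
  · exact hfixv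
  · -- positivity via iterates from 𝟙
    set x₀ : H := ⟨oneL2 m, honeH⟩ with hx₀
    have hiter : ∀ n : ℕ, (0:Lp ℝ 2 m) ≤ (F^[n] x₀ : Lp ℝ 2 m) := by
      intro n
      induction n with
      | zero => simpa using hone_pos
      | succ k ih =>
          rw [Function.iterate_succ_apply']
          exact hTpos _ ih
    have htend : Filter.Tendsto (fun n => (F^[n] x₀ : Lp ℝ 2 m)) Filter.atTop
        (nhds (φ' : Lp ℝ 2 m)) :=
      (continuous_subtype_val.tendsto φ').comp (hCW.tendsto_iterate_fixedPoint x₀)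
    exact ge_of_tendsto' htend hiter
  · intro ψ hψfix hψint
    have h0 : (∫ x, (ψ - (φ' : Lp ℝ 2 m)) x ∂m) = 0 := by
      rw [hint_sub, hψint, φ'.2]; ring
    have hfix2 : adjoint T (ψ - (φ' : Lp ℝ 2 m)) = ψ - (φ' : Lp ℝ 2 m) := by
      rw [map_sub, hψfix, hfixv]
    have hb := hcontr _ h0
    rw [hfix2] at hb
    have : ‖ψ - (φ' : Lp ℝ 2 m)‖ = 0 := by nlinarith [norm_nonneg (ψ - (φ' : Lp ℝ 2 m))]
    have := norm_eq_zero.1 this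
    exact sub_eq_zero.1 this
end

section
/- For every real t > 0, the integral ∫₀^∞ [e^{t/2}·(1+r²)/(1+e^t·r²)] · [2r/(1+r²)²] dr equals (t/2)/sinh(t/2). -/
open MeasureTheory

set_option maxHeartbeats 1000000

/-- For every real `t > 0`,
`∫₀^∞ [e^{t/2}·(1+r²)/(1+e^t·r²)] · [2r/(1+r²)²] dr = (t/2)/sinh(t/2)`. -/
theorem integral_matrix_coefficient (t : ℝ) (ht : 0 < t) :
    ∫ r in Set.Ioi (0 : ℝ),
        (Real.exp (t / 2) * (1 + r ^ 2) / (1 + Real.exp t * r ^ 2)) *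
          (2 * r / (1 + r ^ 2) ^ 2) =
      (t / 2) / Real.sinh (t / 2) := by
  set a := Real.exp t with ha
  have ha1 : 1 < a := by have := Real.add_one_le_exp t; simp only [ha]; linarith
  have ha0 : 0 < a := by linarith
  set c := Real.exp (t / 2) / (a - 1) with hc
  set F : ℝ → ℝ := fun r => c * (Real.log (1 + a * r ^ 2) - Real.log (1 + r ^ 2)) with hF
  have hpos1 : ∀ r : ℝ, 0 < 1 + a * r ^ 2 := fun r => by nlinarith [sq_nonneg r]
  have hpos2 : ∀ r : ℝ, 0 < 1 + r ^ 2 := fun r => by positivity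
  have hderiv : ∀ r ∈ Set.Ioi (0 : ℝ), HasDerivAt F
      ((Real.exp (t / 2) * (1 + r ^ 2) / (1 + a * r ^ 2)) * (2 * r / (1 + r ^ 2) ^ 2)) r := by
    intro r hr
    have h1 : HasDerivAt (fun r : ℝ => 1 + a * r ^ 2) (a * (2 * r)) r := by
      simpa using ((hasDerivAt_pow 2 r).const_mul a).const_add 1
    have h2 : HasDerivAt (fun r : ℝ => 1 + r ^ 2) (2 * r) r := by
      simpa using (hasDerivAt_pow 2 r).const_add 1
    have hl1 := h1.log (hpos1 r).ne'
    have hl2 := h2.log (hpos2 r).ne'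
    have := ((hl1.sub hl2).const_mul c)
    refine HasDerivAt.congr_deriv this ?_
    have e1 := (hpos1 r).ne'
    have e2 := (hpos2 r).ne'
    have e3 : a - 1 ≠ 0 := by linarith
    rw [hc, div_sub_div _ _ e1 e2]
    field_simp
    ring
  have hnn : ∀ r ∈ Set.Ioi (0 : ℝ),
      0 ≤ (Real.exp (t / 2) * (1 + r ^ 2) / (1 + a * r ^ 2)) * (2 * r / (1 + r ^ 2) ^ 2) := by
    intro r hr
    have : (0:ℝ) < r := hr
    have := hpos1 r; have := hpos2 r
    positivity
  have hcont : ContinuousWithinAt F (Set.Ici 0) 0 := by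
    apply Continuous.continuousWithinAt
    fun_prop (disch := intro r; first | exact (hpos1 r).ne' | exact (hpos2 r).ne')
  have htend : Filter.Tendsto F Filter.atTop (nhds (c * t)) := by
    have key : Filter.Tendsto (fun r : ℝ => Real.log (1 + a * r ^ 2) - Real.log (1 + r ^ 2))
        Filter.atTop (nhds t) := by
      have heq : ∀ᶠ r : ℝ in Filter.atTop,
          Real.log (1 + a * r ^ 2) - Real.log (1 + r ^ 2)
            = Real.log ((1 / r ^ 2 + a) / (1 / r ^ 2 + 1)) := by
        filter_upwards [Filter.eventually_gt_atTop (0:ℝ)] with r hr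
        have hr2 : (0:ℝ) < r ^ 2 := by positivity
        rw [← Real.log_div (hpos1 r).ne' (hpos2 r).ne']
        congr 1
        field_simp
      rw [Filter.tendsto_congr' heq]
      have h0 : Filter.Tendsto (fun r : ℝ => 1 / r ^ 2) Filter.atTop (nhds 0) := by
        exact tendsto_const_nhds.div_atTop (Filter.tendsto_pow_atTop two_ne_zero)
      have hratio : Filter.Tendsto (fun r : ℝ => (1 / r ^ 2 + a) / (1 / r ^ 2 + 1))
          Filter.atTop (nhds a) := by
        have := ((h0.add_const a).div (h0.add_const 1) (by norm_num))
        rw [zero_add, zero_add, div_one] at this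
        exact this
      have hla : Real.log a = t := by rw [ha, Real.log_exp]
      rw [← hla]
      exact (Real.continuousAt_log ha0.ne').tendsto.comp hratio
    exact key.const_mul c
  have := integral_Ioi_of_hasDerivAt_of_nonneg hcont hderiv hnn htend
  rw [this]
  have hF0 : F 0 = 0 := by simp [hF]
  rw [hF0, sub_zero, hc]
  set E := Real.exp (t / 2) with hE
  have hE1 : 1 < E := by have := Real.add_one_le_exp (t/2); simp only [hE]; linarith
  have hEne : E ≠ 0 := by positivity
  have hexp : E * E = a := by rw [hE, ← Real.exp_add, ha]; ring_nf
  have h2 : E * E - 1 ≠ 0 := by nlinarith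
  have hsinh2 : Real.sinh (t / 2) = (E * E - 1) / (2 * E) := by
    rw [Real.sinh_eq, Real.exp_neg, ← hE, div_eq_div_iff (two_ne_zero) (by positivity)]
    field_simp
  rw [hsinh2, ← hexp]
  rw [div_div_eq_mul_div]
  ring
end

section
/- Let H be a Hilbert space, H₁ and H₂ closed subspaces, and let δ = 1 − sup{ |⟨f₁,f₂⟩| / (‖f₁‖·‖f₂‖) : f₁ ∈ H₁∖{0}, f₂ ∈ H₂∖{0} } be their angular separation. Let κ ∈ (0,1], and let P₁, P₂ be bounded self-adjoint operators on H with ‖P_i‖ ≤ 1, such that P_i h = h for all h ∈ H_i, and ‖P_i g‖ ≤ (1−κ)‖g‖ for all g in the orthogonal complement H_i^⊥ (i = 1,2). Then the average P = ½(P₁ + P₂) satisfies ‖P‖ ≤ 1 − κ·δ²/36. -/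
open scoped RealInnerProductSpace

private lemma aux_sq_le {x y : ℝ} (hy : 0 ≤ y) (h : x ^ 2 ≤ y ^ 2) : x ≤ y :=
  le_of_pow_le_pow_left₀ two_ne_zero hy h

private lemma aux_par (p m u v ε : ℝ) (h : p * p + m * m = 2 * (u * u + v * v))
    (hu0 : 0 ≤ u) (hv0 : 0 ≤ v) (hu : u ≤ 1) (hv : v ≤ 1) (hε0 : 0 ≤ ε) (hε : ε ≤ 1 / 36)
    (hp : 2 * (1 - ε) < p) : m ^ 2 ≤ 8 * ε := by
  nlinarith [sq_nonneg ε, sq_nonneg m]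

private lemma aux_small (κ ε n h g pg : ℝ) (hκ0 : 0 < κ) (hκ1 : κ ≤ 1) (hε0 : 0 ≤ ε)
    (hε36 : ε ≤ 1 / 36) (hn0 : 0 ≤ n) (hlo : 1 - 2 * ε ≤ n)
    (hpyth : n ^ 2 = h ^ 2 + pg ^ 2) (hpg : pg ^ 2 ≤ (1 - κ) ^ 2 * g ^ 2)
    (hxs : h ^ 2 + g ^ 2 = 1) : κ * g ^ 2 ≤ 4 * ε := by
  nlinarith [sq_nonneg ε, mul_nonneg (mul_nonneg hκ0.le (by linarith : (0:ℝ) ≤ 1 - κ))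
    (sq_nonneg g)]

private lemma aux_near_one {x : ℝ} (h0 : 0 ≤ x) (h : 8 / 9 ≤ x ^ 2) : 9 / 10 ≤ x := by
  nlinarith

private lemma aux_final (δ a b d r : ℝ) (hδ : 0 < δ) (hδ1 : δ ≤ 1) (ha : 9 / 10 ≤ a)
    (hb : 9 / 10 ≤ b) (hd : d ^ 2 ≤ 49 * δ ^ 2 / 36) (hsub : d ^ 2 = a ^ 2 - 2 * r + b ^ 2)
    (hr : r ≤ (1 - δ) * (a * b)) : False := by
  have h1 : 2 * δ * (a * b) ≤ d ^ 2 := by nlinarith [sq_nonneg (a - b)]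
  have h2 : (81 : ℝ) / 100 ≤ a * b := by nlinarith
  have h3 : 2 * δ * (81 / 100) ≤ 2 * δ * (a * b) := by nlinarith
  nlinarith

/-- The angular separation bound between two closed subspaces:
`δ(H₁,H₂) = 1 − sup{ |⟨f₁,f₂⟩| / (‖f₁‖·‖f₂‖) : fᵢ ∈ Hᵢ ∖ {0} }`. -/
noncomputable def angularSeparation {𝕜 H : Type*} [RCLike 𝕜] [NormedAddCommGroup H]
    [InnerProductSpace 𝕜 H] (H₁ H₂ : Submodule 𝕜 H) : ℝ :=
  1 - sSup {c : ℝ | ∃ f₁ f₂ : H, f₁ ∈ H₁ ∧ f₁ ≠ 0 ∧ f₂ ∈ H₂ ∧ f₂ ≠ 0 ∧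
    c = ‖(inner 𝕜 f₁ f₂ : 𝕜)‖ / (‖f₁‖ * ‖f₂‖)}

set_option maxHeartbeats 2000000 in
/-- If `P₁, P₂` are self-adjoint contractions on a Hilbert space `H`, `Pᵢ` fixes the closed
subspace `Hᵢ` pointwise and is a `(1−κ)`-contraction on `Hᵢ^⊥`, and the closed subspaces
`H₁, H₂` have angular separation `δ`, then `‖½(P₁+P₂)‖ ≤ 1 − κδ²/36`. -/
theorem norm_average_le_of_angular_separation
    {𝕜 H : Type*} [RCLike 𝕜] [NormedAddCommGroup H] [InnerProductSpace 𝕜 H]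
    [CompleteSpace H]
    (H₁ H₂ : Submodule 𝕜 H) (hc₁ : IsClosed (H₁ : Set H)) (hc₂ : IsClosed (H₂ : Set H))
    (δ : ℝ) (hδ : δ = angularSeparation H₁ H₂)
    (κ : ℝ) (hκ0 : 0 < κ) (hκ1 : κ ≤ 1)
    (P₁ P₂ : H →L[𝕜] H)
    (hsa₁ : IsSelfAdjoint P₁) (hsa₂ : IsSelfAdjoint P₂)
    (hn₁ : ‖P₁‖ ≤ 1) (hn₂ : ‖P₂‖ ≤ 1)
    (hfix₁ : ∀ h ∈ H₁, P₁ h = h) (hfix₂ : ∀ h ∈ H₂, P₂ h = h)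
    (hcon₁ : ∀ g ∈ H₁ᗮ, ‖P₁ g‖ ≤ (1 - κ) * ‖g‖)
    (hcon₂ : ∀ g ∈ H₂ᗮ, ‖P₂ g‖ ≤ (1 - κ) * ‖g‖) :
    ‖((2 : 𝕜)⁻¹) • (P₁ + P₂)‖ ≤ 1 - κ * δ ^ 2 / 36 := by
  classical
  set S : Set ℝ := {c : ℝ | ∃ f₁ f₂ : H, f₁ ∈ H₁ ∧ f₁ ≠ 0 ∧ f₂ ∈ H₂ ∧ f₂ ≠ 0 ∧
    c = ‖(inner 𝕜 f₁ f₂ : 𝕜)‖ / (‖f₁‖ * ‖f₂‖)} with hS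
  have hSub : ∀ c ∈ S, c ≤ 1 := by
    rintro c ⟨f₁, f₂, _, hf₁, _, hf₂, rfl⟩
    have h1 : 0 < ‖f₁‖ * ‖f₂‖ :=
      mul_pos (norm_pos_iff.mpr hf₁) (norm_pos_iff.mpr hf₂)
    rw [div_le_one h1]
    exact norm_inner_le_norm _ _
  have hSnn : ∀ c ∈ S, 0 ≤ c := by
    rintro c ⟨f₁, f₂, _, _, _, _, rfl⟩
    positivity
  have hbdd : BddAbove S := ⟨1, hSub⟩
  have hδ1 : δ ≤ 1 := by
    rw [hδ, angularSeparation]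
    have : (0:ℝ) ≤ sSup S := Real.sSup_nonneg hSnn
    simp only [← hS]
    linarith
  have hδ0 : 0 ≤ δ := by
    rw [hδ, angularSeparation]
    have : sSup S ≤ 1 := Real.sSup_le hSub zero_le_one
    simp only [← hS]
    linarith
  have hδsq : δ ^ 2 ≤ 1 := by nlinarith
  set ε : ℝ := κ * δ ^ 2 / 36 with hε
  have hε0 : 0 ≤ ε := by positivity
  have hε36 : ε ≤ 1 / 36 := by rw [hε]; nlinarith
  haveI : CompleteSpace H₁ := hc₁.completeSpace_coe
  haveI : CompleteSpace H₂ := hc₂.completeSpace_coe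
  -- key pointwise bound
  have key : ∀ x : H, ‖x‖ = 1 → ‖P₁ x + P₂ x‖ ≤ 2 * (1 - ε) := by
    intro x hx
    by_contra hcontra
    push_neg at hcontra
    have hu1 : ‖P₁ x‖ ≤ 1 := by
      have := P₁.le_opNorm x
      rw [hx, mul_one] at this
      linarith
    have hv1 : ‖P₂ x‖ ≤ 1 := by
      have := P₂.le_opNorm x
      rw [hx, mul_one] at this
      linarith
    have hsum2 : ‖P₁ x + P₂ x‖ ≤ 2 := le_trans (norm_add_le _ _) (by linarith)
    -- δ must be positive
    have hδpos : 0 < δ := by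
      rcases hδ0.lt_or_eq with h | h
      · exact h
      · exfalso
        have hez : ε = 0 := by rw [hε, ← h]; ring
        rw [hez] at hcontra
        norm_num at hcontra
        linarith
    -- parallelogram law
    have hdiff : ‖P₁ x - P₂ x‖ ^ 2 ≤ 8 * ε :=
      aux_par _ _ _ _ _ (by have := parallelogram_law_with_norm 𝕜 (P₁ x) (P₂ x); simp only [sq] at this; exact this)
        (norm_nonneg _) (norm_nonneg _) hu1 hv1 hε0 hε36 hcontra
    have hu_lo : 1 - 2 * ε ≤ ‖P₁ x‖ := by
      have := norm_add_le (P₁ x) (P₂ x)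
      linarith
    have hv_lo : 1 - 2 * ε ≤ ‖P₂ x‖ := by
      have := norm_add_le (P₁ x) (P₂ x)
      linarith
    -- orthogonal decompositions
    obtain ⟨h₁, hh₁, g₁, hg₁, hxd₁⟩ := H₁.exists_add_mem_mem_orthogonal x
    obtain ⟨h₂, hh₂, g₂, hg₂, hxd₂⟩ := H₂.exists_add_mem_mem_orthogonal x
    have hPg₁mem : P₁ g₁ ∈ H₁ᗮ := by
      rw [Submodule.mem_orthogonal]
      intro w hw
      have hsym : (inner 𝕜 (P₁ w) g₁ : 𝕜) = inner 𝕜 w (P₁ g₁) := hsa₁.isSymmetric w g₁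
      rw [hfix₁ w hw] at hsym
      rw [← hsym]
      exact (Submodule.mem_orthogonal H₁ g₁).mp hg₁ w hw
    have hPg₂mem : P₂ g₂ ∈ H₂ᗮ := by
      rw [Submodule.mem_orthogonal]
      intro w hw
      have hsym : (inner 𝕜 (P₂ w) g₂ : 𝕜) = inner 𝕜 w (P₂ g₂) := hsa₂.isSymmetric w g₂
      rw [hfix₂ w hw] at hsym
      rw [← hsym]
      exact (Submodule.mem_orthogonal H₂ g₂).mp hg₂ w hw
    have hPx₁ : P₁ x = h₁ + P₁ g₁ := by
      rw [hxd₁, map_add, hfix₁ h₁ hh₁]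
    have hPx₂ : P₂ x = h₂ + P₂ g₂ := by
      rw [hxd₂, map_add, hfix₂ h₂ hh₂]
    have hip₁ : (inner 𝕜 h₁ (P₁ g₁) : 𝕜) = 0 :=
      (Submodule.mem_orthogonal H₁ (P₁ g₁)).mp hPg₁mem h₁ hh₁
    have hip₂ : (inner 𝕜 h₂ (P₂ g₂) : 𝕜) = 0 :=
      (Submodule.mem_orthogonal H₂ (P₂ g₂)).mp hPg₂mem h₂ hh₂
    have hig₁ : (inner 𝕜 h₁ g₁ : 𝕜) = 0 :=
      (Submodule.mem_orthogonal H₁ g₁).mp hg₁ h₁ hh₁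
    have hig₂ : (inner 𝕜 h₂ g₂ : 𝕜) = 0 :=
      (Submodule.mem_orthogonal H₂ g₂).mp hg₂ h₂ hh₂
    have hpyth₁ : ‖P₁ x‖ ^ 2 = ‖h₁‖ ^ 2 + ‖P₁ g₁‖ ^ 2 := by
      rw [hPx₁, norm_add_sq (𝕜 := 𝕜), hip₁]
      simp
    have hpyth₂ : ‖P₂ x‖ ^ 2 = ‖h₂‖ ^ 2 + ‖P₂ g₂‖ ^ 2 := by
      rw [hPx₂, norm_add_sq (𝕜 := 𝕜), hip₂]
      simp
    have hxs₁ : ‖h₁‖ ^ 2 + ‖g₁‖ ^ 2 = 1 := by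
      have h' := norm_add_sq (𝕜 := 𝕜) h₁ g₁
      rw [hig₁, ← hxd₁, hx] at h'
      simp at h'
      linarith
    have hxs₂ : ‖h₂‖ ^ 2 + ‖g₂‖ ^ 2 = 1 := by
      have h' := norm_add_sq (𝕜 := 𝕜) h₂ g₂
      rw [hig₂, ← hxd₂, hx] at h'
      simp at h'
      linarith
    have hPg₁ : ‖P₁ g₁‖ ≤ (1 - κ) * ‖g₁‖ := hcon₁ g₁ hg₁
    have hPg₂ : ‖P₂ g₂‖ ≤ (1 - κ) * ‖g₂‖ := hcon₂ g₂ hg₂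
    have h1κ : (0:ℝ) ≤ 1 - κ := by linarith
    have hPg₁sq : ‖P₁ g₁‖ ^ 2 ≤ (1 - κ) ^ 2 * ‖g₁‖ ^ 2 := by
      calc ‖P₁ g₁‖ ^ 2 ≤ ((1 - κ) * ‖g₁‖) ^ 2 :=
            pow_le_pow_left₀ (norm_nonneg (P₁ g₁)) hPg₁ 2
        _ = (1 - κ) ^ 2 * ‖g₁‖ ^ 2 := by ring
    have hPg₂sq : ‖P₂ g₂‖ ^ 2 ≤ (1 - κ) ^ 2 * ‖g₂‖ ^ 2 := by
      calc ‖P₂ g₂‖ ^ 2 ≤ ((1 - κ) * ‖g₂‖) ^ 2 :=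
            pow_le_pow_left₀ (norm_nonneg (P₂ g₂)) hPg₂ 2
        _ = (1 - κ) ^ 2 * ‖g₂‖ ^ 2 := by ring
    -- the orthogonal components are small
    have hg₁sq : ‖g₁‖ ^ 2 ≤ δ ^ 2 / 9 := by
      have hk := aux_small κ ε ‖P₁ x‖ ‖h₁‖ ‖g₁‖ ‖P₁ g₁‖ hκ0 hκ1 hε0 hε36
        (norm_nonneg _) hu_lo hpyth₁ hPg₁sq hxs₁
      have hk' : κ * ‖g₁‖ ^ 2 ≤ κ * (δ ^ 2 / 9) := by rw [hε] at hk; linarith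
      exact le_of_mul_le_mul_left hk' hκ0
    have hg₂sq : ‖g₂‖ ^ 2 ≤ δ ^ 2 / 9 := by
      have hk := aux_small κ ε ‖P₂ x‖ ‖h₂‖ ‖g₂‖ ‖P₂ g₂‖ hκ0 hκ1 hε0 hε36
        (norm_nonneg _) hv_lo hpyth₂ hPg₂sq hxs₂
      have hk' : κ * ‖g₂‖ ^ 2 ≤ κ * (δ ^ 2 / 9) := by rw [hε] at hk; linarith
      exact le_of_mul_le_mul_left hk' hκ0
    have hg₁n : ‖g₁‖ ≤ δ / 3 := by
      refine aux_sq_le (by linarith) ?_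
      calc ‖g₁‖ ^ 2 ≤ δ ^ 2 / 9 := hg₁sq
        _ = (δ / 3) ^ 2 := by ring
    have hg₂n : ‖g₂‖ ≤ δ / 3 := by
      refine aux_sq_le (by linarith) ?_
      calc ‖g₂‖ ^ 2 ≤ δ ^ 2 / 9 := hg₂sq
        _ = (δ / 3) ^ 2 := by ring
    -- h₁ and h₂ are close
    have hdiffn : ‖P₁ x - P₂ x‖ ≤ δ / 2 := by
      refine aux_sq_le (by linarith) ?_
      have h8 : 8 * ε ≤ (δ / 2) ^ 2 := by
        rw [hε]
        nlinarith [mul_nonneg (by linarith : (0:ℝ) ≤ 1 - κ) (sq_nonneg δ)]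
      linarith
    have he₁ : ‖h₁ - P₁ x‖ ≤ δ / 3 := by
      rw [hPx₁]
      have heq : h₁ - (h₁ + P₁ g₁) = -(P₁ g₁) := by abel
      rw [heq, norm_neg]
      calc ‖P₁ g₁‖ ≤ (1 - κ) * ‖g₁‖ := hPg₁
        _ ≤ ‖g₁‖ := mul_le_of_le_one_left (norm_nonneg g₁) (by linarith)
        _ ≤ δ / 3 := hg₁n
    have he₂ : ‖P₂ x - h₂‖ ≤ δ / 3 := by
      rw [hPx₂]
      have heq : h₂ + P₂ g₂ - h₂ = P₂ g₂ := by abel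
      rw [heq]
      calc ‖P₂ g₂‖ ≤ (1 - κ) * ‖g₂‖ := hPg₂
        _ ≤ ‖g₂‖ := mul_le_of_le_one_left (norm_nonneg g₂) (by linarith)
        _ ≤ δ / 3 := hg₂n
    have hd : ‖h₁ - h₂‖ ≤ 7 * δ / 6 := by
      have htri := dist_triangle4 h₁ (P₁ x) (P₂ x) h₂
      simp only [dist_eq_norm] at htri
      linarith
    have hdsq : ‖h₁ - h₂‖ ^ 2 ≤ 49 * δ ^ 2 / 36 := by
      have := pow_le_pow_left₀ (norm_nonneg (h₁ - h₂)) hd 2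
      calc ‖h₁ - h₂‖ ^ 2 ≤ (7 * δ / 6) ^ 2 := this
        _ = 49 * δ ^ 2 / 36 := by ring
    -- h₁, h₂ are near-unit
    have hh₁sq : 8 / 9 ≤ ‖h₁‖ ^ 2 := by linarith
    have hh₂sq : 8 / 9 ≤ ‖h₂‖ ^ 2 := by linarith
    have ha : 9 / 10 ≤ ‖h₁‖ := aux_near_one (norm_nonneg h₁) hh₁sq
    have hb : 9 / 10 ≤ ‖h₂‖ := aux_near_one (norm_nonneg h₂) hh₂sq
    have hne₁ : h₁ ≠ 0 := by
      intro h; rw [h, norm_zero] at ha; linarith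
    have hne₂ : h₂ ≠ 0 := by
      intro h; rw [h, norm_zero] at hb; linarith
    -- angular separation bound
    have hmem : ‖(inner 𝕜 h₁ h₂ : 𝕜)‖ / (‖h₁‖ * ‖h₂‖) ∈ S :=
      ⟨h₁, h₂, hh₁, hne₁, hh₂, hne₂, rfl⟩
    have hle : ‖(inner 𝕜 h₁ h₂ : 𝕜)‖ / (‖h₁‖ * ‖h₂‖) ≤ sSup S := le_csSup hbdd hmem
    have hδle : δ ≤ 1 - ‖(inner 𝕜 h₁ h₂ : 𝕜)‖ / (‖h₁‖ * ‖h₂‖) := by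
      rw [hδ, angularSeparation]
      simp only [← hS]
      linarith
    have habpos : 0 < ‖h₁‖ * ‖h₂‖ := mul_pos (by linarith) (by linarith)
    have hinle : ‖(inner 𝕜 h₁ h₂ : 𝕜)‖ ≤ (1 - δ) * (‖h₁‖ * ‖h₂‖) := by
      have h' : ‖(inner 𝕜 h₁ h₂ : 𝕜)‖ / (‖h₁‖ * ‖h₂‖) ≤ 1 - δ := by linarith
      exact (div_le_iff₀ habpos).mp h'
    have hre : RCLike.re (inner 𝕜 h₁ h₂ : 𝕜) ≤ (1 - δ) * (‖h₁‖ * ‖h₂‖) :=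
      le_trans (RCLike.re_le_norm _) hinle
    have hns : ‖h₁ - h₂‖ ^ 2 =
        ‖h₁‖ ^ 2 - 2 * RCLike.re (inner 𝕜 h₁ h₂ : 𝕜) + ‖h₂‖ ^ 2 :=
      norm_sub_sq (𝕜 := 𝕜) h₁ h₂
    exact aux_final δ ‖h₁‖ ‖h₂‖ ‖h₁ - h₂‖ (RCLike.re (inner 𝕜 h₁ h₂ : 𝕜))
      hδpos hδ1 ha hb hdsq hns hre
  -- conclude the operator norm bound
  have hbound : (0:ℝ) ≤ 1 - ε := by linarith
  have hfin : ‖((2 : 𝕜)⁻¹) • (P₁ + P₂)‖ ≤ 1 - ε := by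
    apply ContinuousLinearMap.opNorm_le_bound _ hbound
    intro x
    rcases eq_or_ne x 0 with rfl | hx0
    · simp
    · have hxpos : 0 < ‖x‖ := norm_pos_iff.mpr hx0
      set y : H := ((‖x‖ : 𝕜))⁻¹ • x with hy
      have hyn : ‖y‖ = 1 := norm_smul_inv_norm hx0
      have hkey := key y hyn
      have heq : P₁ y + P₂ y = ((‖x‖ : 𝕜))⁻¹ • (P₁ x + P₂ x) := by
        rw [hy, map_smul, map_smul, smul_add]
      rw [heq, norm_smul] at hkey
      have hninv : ‖((‖x‖ : 𝕜))⁻¹‖ = ‖x‖⁻¹ := by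
        rw [norm_inv, RCLike.norm_ofReal, abs_of_nonneg (norm_nonneg x)]
      rw [hninv] at hkey
      have hsum : ‖P₁ x + P₂ x‖ ≤ 2 * (1 - ε) * ‖x‖ := by
        rw [inv_mul_le_iff₀ hxpos] at hkey
        linarith
      have happ : (((2 : 𝕜)⁻¹) • (P₁ + P₂)) x = ((2 : 𝕜))⁻¹ • (P₁ x + P₂ x) := by
        simp
      rw [happ, norm_smul]
      have h2 : ‖((2 : 𝕜))⁻¹‖ = (2:ℝ)⁻¹ := by
        rw [norm_inv]
        norm_num
      rw [h2]
      linarith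
  rw [hε] at hfin
  linarith
end

section
/- Let H be a Hilbert space and H₁, H₂ closed subspaces with angular separation δ = 1 − sup{ |⟨f₁,f₂⟩| / (‖f₁‖·‖f₂‖) : f₁ ∈ H₁∖{0}, f₂ ∈ H₂∖{0} } satisfying 0 < δ ≤ 1. Let f ∈ H be a unit vector and write f = f₁ + g₁ = f₂ + g₂ with f_i ∈ H_i and g_i ∈ H_i^⊥ (i = 1,2). Then max(‖g₁‖, ‖g₂‖) > δ/3. -/
set_option maxHeartbeats 1000000 in
/-- If `H₁, H₂` are closed subspaces of a Hilbert space with angular separation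
`δ ∈ (0,1]`, and a unit vector `f` decomposes orthogonally as `f = f₁ + g₁ = f₂ + g₂`
with `fᵢ ∈ Hᵢ` and `gᵢ ∈ Hᵢ^⊥`, then `max(‖g₁‖,‖g₂‖) > δ/3`. -/
theorem not_close_to_both_subspaces
    {𝕜 H : Type*} [RCLike 𝕜] [NormedAddCommGroup H] [InnerProductSpace 𝕜 H]
    [CompleteSpace H]
    (H₁ H₂ : Submodule 𝕜 H) (hc₁ : IsClosed (H₁ : Set H)) (hc₂ : IsClosed (H₂ : Set H))
    (δ : ℝ) (hδ : δ = angularSeparation H₁ H₂) (hδ0 : 0 < δ) (hδ1 : δ ≤ 1)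
    (f f₁ g₁ f₂ g₂ : H) (hf : ‖f‖ = 1)
    (hf₁ : f₁ ∈ H₁) (hg₁ : g₁ ∈ H₁ᗮ) (hsum₁ : f = f₁ + g₁)
    (hf₂ : f₂ ∈ H₂) (hg₂ : g₂ ∈ H₂ᗮ) (hsum₂ : f = f₂ + g₂) :
    δ / 3 < max ‖g₁‖ ‖g₂‖ := by
  by_contra hcon
  push_neg at hcon
  set a := ‖g₁‖ with ha_def
  set b := ‖g₂‖ with hb_def
  have ha : a ≤ δ / 3 := le_trans (le_max_left _ _) hcon
  have hb : b ≤ δ / 3 := le_trans (le_max_right _ _) hcon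
  have ha0 : 0 ≤ a := norm_nonneg _
  have hb0 : 0 ≤ b := norm_nonneg _
  -- orthogonality facts
  have hig₁ : (inner 𝕜 f₁ g₁ : 𝕜) = 0 := hg₁ f₁ hf₁
  have hig₂ : (inner 𝕜 f₂ g₂ : 𝕜) = 0 := hg₂ f₂ hf₂
  -- Pythagoras
  have hn₁ : ‖f₁‖ ^ 2 + a ^ 2 = 1 := by
    have := norm_add_sq_eq_norm_sq_add_norm_sq_of_inner_eq_zero f₁ g₁ hig₁
    rw [← hsum₁, hf] at this
    linarith [this]
  have hn₂ : ‖f₂‖ ^ 2 + b ^ 2 = 1 := by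
    have := norm_add_sq_eq_norm_sq_add_norm_sq_of_inner_eq_zero f₂ g₂ hig₂
    rw [← hsum₂, hf] at this
    linarith [this]
  have hf₁le : ‖f₁‖ ≤ 1 := by nlinarith [norm_nonneg f₁]
  have hf₂le : ‖f₂‖ ≤ 1 := by nlinarith [norm_nonneg f₂]
  have hf₁pos : 0 < ‖f₁‖ := by nlinarith [norm_nonneg f₁]
  have hf₂pos : 0 < ‖f₂‖ := by nlinarith [norm_nonneg f₂]
  have hf₁ne : f₁ ≠ 0 := by
    intro h; rw [h, norm_zero] at hf₁pos; exact lt_irrefl 0 hf₁pos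
  have hf₂ne : f₂ ≠ 0 := by
    intro h; rw [h, norm_zero] at hf₂pos; exact lt_irrefl 0 hf₂pos
  -- inner product expansion
  have hfg₂ : (inner 𝕜 f g₂ : 𝕜) = (b : 𝕜) ^ 2 := by
    rw [hsum₂, inner_add_left, hig₂, zero_add, inner_self_eq_norm_sq_to_K]
  have hg₁f : (inner 𝕜 g₁ f : 𝕜) = (a : 𝕜) ^ 2 := by
    have : (inner 𝕜 g₁ f₁ : 𝕜) = 0 := inner_eq_zero_symm.mp hig₁
    rw [hsum₁, inner_add_right, this, zero_add, inner_self_eq_norm_sq_to_K]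
  have hff : (inner 𝕜 f f : 𝕜) = 1 := by
    rw [inner_self_eq_norm_sq_to_K, hf]; norm_num
  have hexp : (inner 𝕜 f₁ f₂ : 𝕜) = ((1 - a ^ 2 - b ^ 2 : ℝ) : 𝕜) + inner 𝕜 g₁ g₂ := by
    have e1 : f₁ = f - g₁ := by rw [hsum₁]; abel
    have e2 : f₂ = f - g₂ := by rw [hsum₂]; abel
    rw [e1, e2, inner_sub_left, inner_sub_right, inner_sub_right, hfg₂, hg₁f, hff]
    push_cast
    ring
  have hgg : ‖(inner 𝕜 g₁ g₂ : 𝕜)‖ ≤ a * b := norm_inner_le_norm g₁ g₂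
  have hcpos : 0 ≤ 1 - a ^ 2 - b ^ 2 := by nlinarith
  have hlow : 1 - a ^ 2 - b ^ 2 - a * b ≤ ‖(inner 𝕜 f₁ f₂ : 𝕜)‖ := by
    have h1 : ‖((1 - a ^ 2 - b ^ 2 : ℝ) : 𝕜)‖ ≤ ‖(inner 𝕜 f₁ f₂ : 𝕜)‖ + ‖(inner 𝕜 g₁ g₂ : 𝕜)‖ := by
      calc ‖((1 - a ^ 2 - b ^ 2 : ℝ) : 𝕜)‖
          = ‖(inner 𝕜 f₁ f₂ : 𝕜) - inner 𝕜 g₁ g₂‖ := by rw [hexp]; congr 1; ring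
        _ ≤ _ := norm_sub_le _ _
    have h2 : ‖((1 - a ^ 2 - b ^ 2 : ℝ) : 𝕜)‖ = 1 - a ^ 2 - b ^ 2 := by
      rw [RCLike.norm_ofReal, abs_of_nonneg hcpos]
    linarith
  -- sup bound
  set S : Set ℝ := {c : ℝ | ∃ f₁ f₂ : H, f₁ ∈ H₁ ∧ f₁ ≠ 0 ∧ f₂ ∈ H₂ ∧ f₂ ≠ 0 ∧
    c = ‖(inner 𝕜 f₁ f₂ : 𝕜)‖ / (‖f₁‖ * ‖f₂‖)} with hS_def
  have hbdd : BddAbove S := by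
    refine ⟨1, fun c hc => ?_⟩
    obtain ⟨u, v, _, hu0, _, hv0, rfl⟩ := hc
    rw [div_le_one (mul_pos (norm_pos_iff.mpr hu0) (norm_pos_iff.mpr hv0))]
    exact norm_inner_le_norm u v
  have hmem : ‖(inner 𝕜 f₁ f₂ : 𝕜)‖ / (‖f₁‖ * ‖f₂‖) ∈ S :=
    ⟨f₁, f₂, hf₁, hf₁ne, hf₂, hf₂ne, rfl⟩
  have hsupS : sSup S = 1 - δ := by
    rw [hδ, angularSeparation, sub_sub_cancel]
  have hsup : ‖(inner 𝕜 f₁ f₂ : 𝕜)‖ / (‖f₁‖ * ‖f₂‖) ≤ 1 - δ := by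
    have h := le_csSup hbdd hmem
    rwa [hsupS] at h
  have hup : ‖(inner 𝕜 f₁ f₂ : 𝕜)‖ ≤ (1 - δ) * (‖f₁‖ * ‖f₂‖) := by
    rw [div_le_iff₀ (by positivity)] at hsup
    linarith
  have hprod : ‖f₁‖ * ‖f₂‖ ≤ 1 := by nlinarith
  have hδ1' : 0 ≤ 1 - δ := by linarith
  have hfin : ‖(inner 𝕜 f₁ f₂ : 𝕜)‖ ≤ 1 - δ :=
    hup.trans (mul_le_of_le_one_right hδ1' hprod)
  have hab : a * b ≤ δ / 3 * (δ / 3) := mul_le_mul ha hb hb0 (by linarith)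
  have haa : a * a ≤ δ / 3 * (δ / 3) := mul_le_mul ha ha ha0 (by linarith)
  have hbb : b * b ≤ δ / 3 * (δ / 3) := mul_le_mul hb hb hb0 (by linarith)
  have hδδ : δ * δ ≤ δ := mul_le_of_le_one_right hδ0.le hδ1
  nlinarith [hlow, hfin, hab, haa, hbb, hδδ]
end

section
/- Let H be a Hilbert space, e ∈ H a unit vector, and κ ∈ (0,1]. Let P be a bounded self-adjoint operator on H with ‖P‖ ≤ 1, Pe = e, and ‖Pg‖ ≤ (1−κ)‖g‖ for every g orthogonal to e. Let f ∈ H be a unit vector with ⟨f,e⟩ = 1−δ for some δ ∈ [0,1], and suppose ‖Pf‖ ≥ 1−η for some η ≥ 0. Then κ·δ ≤ 2η. -/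
/-- Let `P` be a self-adjoint contraction on a Hilbert space fixing a unit vector `e` and
contracting by `(1−κ)` on the orthogonal complement of `e`. If a unit vector `f` has
`⟨f,e⟩ = 1−δ` with `δ ∈ [0,1]` and `‖Pf‖ ≥ 1−η`, then `κδ ≤ 2η`. -/
theorem almost_fixed_vector_close_to_fixed
    {𝕜 H : Type*} [RCLike 𝕜] [NormedAddCommGroup H] [InnerProductSpace 𝕜 H]
    [CompleteSpace H]
    (e : H) (he : ‖e‖ = 1)
    (κ : ℝ) (hκ0 : 0 < κ) (hκ1 : κ ≤ 1)
    (P : H →L[𝕜] H) (hsa : IsSelfAdjoint P) (hP : ‖P‖ ≤ 1) (hPe : P e = e)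
    (hgap : ∀ g : H, (inner 𝕜 g e : 𝕜) = 0 → ‖P g‖ ≤ (1 - κ) * ‖g‖)
    (f : H) (hf : ‖f‖ = 1)
    (δ : ℝ) (hδ0 : 0 ≤ δ) (hδ1 : δ ≤ 1) (hfe : (inner 𝕜 f e : 𝕜) = ((1 - δ : ℝ) : 𝕜))
    (η : ℝ) (hη : 0 ≤ η) (hPf : 1 - η ≤ ‖P f‖) :
    κ * δ ≤ 2 * η := by
  by_cases hη1 : 1 ≤ η
  · nlinarith
  push_neg at hη1
  set c : 𝕜 := ((1 - δ : ℝ) : 𝕜) with hc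
  set f₀ : H := f - c • e with hf₀
  have hee : (inner 𝕜 e e : 𝕜) = 1 := by
    rw [inner_self_eq_norm_sq_to_K, he]; norm_num
  have h0 : (inner 𝕜 f₀ e : 𝕜) = 0 := by
    rw [hf₀, inner_sub_left, inner_smul_left, hfe, hee, hc]
    simp
  have hPf₀ : (inner 𝕜 (P f₀) e : 𝕜) = 0 := by
    rw [← hsa.adjoint_eq, ContinuousLinearMap.adjoint_inner_left, hPe, h0]
  have hce : ‖c • e‖ = 1 - δ := by
    have hcn : ‖c‖ = 1 - δ := by
      rw [hc, RCLike.norm_ofReal, abs_of_nonneg (by linarith : (0:ℝ) ≤ 1 - δ)]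
    rw [norm_smul, hcn, he, mul_one]
  have hfeq : f = c • e + f₀ := by rw [hf₀]; abel
  have hn0 : ‖f₀‖ ^ 2 = 1 - (1 - δ) ^ 2 := by
    have horth : (inner 𝕜 (c • e) f₀ : 𝕜) = 0 := by
      rw [inner_smul_left, ← inner_conj_symm, h0]; simp
    have := norm_add_sq_eq_norm_sq_add_norm_sq_of_inner_eq_zero (c • e) f₀ horth
    rw [← hfeq, hf, hce] at this
    nlinarith
  have hPfeq : P f = c • e + P f₀ := by
    rw [hfeq, map_add, map_smul, hPe]
  have hPsum : ‖P f‖ ^ 2 = (1 - δ) ^ 2 + ‖P f₀‖ ^ 2 := by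
    have horth : (inner 𝕜 (c • e) (P f₀) : 𝕜) = 0 := by
      rw [inner_smul_left, ← inner_conj_symm, hPf₀]; simp
    have := norm_add_sq_eq_norm_sq_add_norm_sq_of_inner_eq_zero (c • e) (P f₀) horth
    rw [← hPfeq, hce] at this
    linarith
  have hcontr : ‖P f₀‖ ≤ (1 - κ) * ‖f₀‖ := hgap f₀ h0
  have h1 : (1 - η) ^ 2 ≤ ‖P f‖ ^ 2 := by
    have : (0:ℝ) ≤ 1 - η := by linarith
    nlinarith
  have hPk : ‖P f₀‖ ^ 2 ≤ (1 - κ) ^ 2 * ‖f₀‖ ^ 2 := by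
    have h2 : (0:ℝ) ≤ ‖P f₀‖ := norm_nonneg _
    nlinarith [norm_nonneg f₀]
  have hx : 0 ≤ κ * δ * ((2 - δ) * (2 - κ) - 1) := by
    apply mul_nonneg (mul_nonneg hκ0.le hδ0)
    nlinarith
  nlinarith [sq_nonneg η]
end
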